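/- For any n×n matrix y, any row vector v* ∈ M_{1,n}(ℂ), any column vector u ∈ M_{n,1}(ℂ), and 0 ≤ k ≤ n-1, one has v*·B_k(y + u v*) = v*·B_k(y). -/

import Mathlib

open Matrix BigOperators

/-- The signed coefficients of the characteristic polynomial:
`det (t•I - x) = t^n - p 1 x * t^(n-1) - ⋯ - p n x`. -/
noncomputable def charCoeff (n : ℕ) (k : ℕ) (x : Matrix (Fin n) (Fin n) ℂ) : ℂ :=
  -(x.charpoly.coeff (n - k))

/-- `B n k x = x^k - p 1 x • x^(k-1) - ⋯ - p k x • I`. -/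
noncomputable def gradB (n : ℕ) (k : ℕ) (x : Matrix (Fin n) (Fin n) ℂ) :
    Matrix (Fin n) (Fin n) ℂ :=
  x ^ k - ∑ i ∈ Finset.Icc 1 k, charCoeff n i x • x ^ (k - i)

open Polynomial
lemma gradB_zero (n : ℕ) (x : Matrix (Fin n) (Fin n) ℂ) : gradB n 0 x = 1 := by
  simp [gradB]

lemma gradB_succ (n k : ℕ) (x : Matrix (Fin n) (Fin n) ℂ) :
    gradB n (k+1) x = gradB n k x * x - charCoeff n (k+1) x • (1 : Matrix (Fin n) (Fin n) ℂ) := by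
  unfold gradB
  rw [Finset.sum_Icc_succ_top (by omega : 1 ≤ k+1), sub_mul, Finset.sum_mul, ← pow_succ]
  have h : ∀ i ∈ Finset.Icc 1 k,
      (charCoeff n i x • x ^ (k - i)) * x = charCoeff n i x • x ^ (k+1-i) := by
    intro i hi
    obtain ⟨h1, h2⟩ := Finset.mem_Icc.mp hi
    rw [smul_mul_assoc, ← pow_succ, show k - i + 1 = k + 1 - i by omega]
  rw [Finset.sum_congr rfl h, Nat.sub_self, pow_zero]
  abel

lemma gradB_dim (n : ℕ) (x : Matrix (Fin n) (Fin n) ℂ) : gradB n n x = 0 := by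
  have hCH := x.aeval_self_charpoly
  have hdeg : x.charpoly.natDegree = n := by simp
  rw [Polynomial.aeval_eq_sum_range' (n := n+1) (by omega), Finset.sum_range_succ] at hCH
  have hcn : x.charpoly.coeff n = 1 := by
    have := x.charpoly_monic.coeff_natDegree
    rwa [hdeg] at this
  rw [hcn, one_smul] at hCH
  have hsum : ∑ i ∈ Finset.Icc 1 n, charCoeff n i x • x ^ (n - i) = x ^ n := by
    rw [← Finset.Ico_add_one_right_eq_Icc, Finset.sum_Ico_eq_sum_range]
    rw [show n+1-1 = n from rfl]
    have h1 : ∀ i ∈ Finset.range n,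
        charCoeff n (1 + i) x • x ^ (n - (1 + i))
          = (fun j => (-(x.charpoly.coeff j)) • x ^ j) (n - 1 - i) := by
      intro i hi
      have hni : n - (1 + i) = n - 1 - i := by omega
      rw [charCoeff, hni]
    rw [Finset.sum_congr rfl h1,
      Finset.sum_range_reflect (fun j => (-(x.charpoly.coeff j)) • x ^ j) n]
    simp only [neg_smul]
    rw [Finset.sum_neg_distrib]
    exact neg_eq_of_add_eq_zero_right hCH
  unfold gradB
  rw [hsum, sub_self]

noncomputable def Smat (n : ℕ) (x : Matrix (Fin n) (Fin n) ℂ) :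
    Matrix (Fin n) (Fin n) ℂ[X] :=
  ∑ k ∈ Finset.range n, (X : ℂ[X])^(n-1-k) • (gradB n k x).map C

lemma smul_one_map (n : ℕ) (a : ℂ) :
    ((a • (1 : Matrix (Fin n) (Fin n) ℂ)).map C) = C a • (1 : Matrix (Fin n) (Fin n) ℂ[X]) := by
  ext i j
  by_cases h : i = j <;> simp [Matrix.map_apply, Matrix.one_apply, h]

lemma charmatrix_eq (n : ℕ) (x : Matrix (Fin n) (Fin n) ℂ) :
    charmatrix x = (X : ℂ[X]) • (1 : Matrix (Fin n) (Fin n) ℂ[X]) - x.map C := by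
  ext i j
  by_cases h : i = j
  · subst h; simp [charmatrix_apply_eq, Matrix.map_apply]
  · simp [charmatrix_apply_ne _ _ _ h, Matrix.one_apply_ne h, Matrix.map_apply]

lemma Smat_mul (n : ℕ) (x : Matrix (Fin n) (Fin n) ℂ) :
    Smat n x * charmatrix x = x.charpoly • (1 : Matrix (Fin n) (Fin n) ℂ[X]) := by
  classical
  set g : ℕ → Matrix (Fin n) (Fin n) ℂ[X] :=
    fun j => (X : ℂ[X])^(n-j) • (gradB n j x).map C with hg
  have h1 : Smat n x * ((X : ℂ[X]) • (1 : Matrix (Fin n) (Fin n) ℂ[X]))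
      = ∑ k ∈ Finset.range n, g k := by
    rw [Matrix.mul_smul, Matrix.mul_one, Smat, Finset.smul_sum]
    refine Finset.sum_congr rfl fun k hk => ?_
    have hkn : k < n := Finset.mem_range.mp hk
    rw [hg, smul_smul, ← pow_succ', show n - 1 - k + 1 = n - k by omega]
  have h2 : Smat n x * (x.map C)
      = ∑ k ∈ Finset.range n,
          (g (k+1) + ((X : ℂ[X])^(n-1-k) * C (charCoeff n (k+1) x)) • 1) := by
    rw [Smat, Finset.sum_mul]
    refine Finset.sum_congr rfl fun k hk => ?_
    have hkn : k < n := Finset.mem_range.mp hk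
    have hBx : gradB n k x * x = gradB n (k+1) x + charCoeff n (k+1) x • 1 := by
      rw [gradB_succ n k x]; abel
    have hgk : g (k+1) = (X : ℂ[X]) ^ (n - (k+1)) • (gradB n (k+1) x).map C := rfl
    rw [smul_mul_assoc, ← Matrix.map_mul, hBx, Matrix.map_add, smul_add, smul_one_map,
      smul_smul, hgk, show n - (k+1) = n - 1 - k by omega]
    exact fun a₁ a₂ => map_add C a₁ a₂
  rw [charmatrix_eq, Matrix.mul_sub, h1, h2, Finset.sum_add_distrib, sub_add_eq_sub_sub,
    ← Finset.sum_sub_distrib, Finset.sum_range_sub' g n]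
  have hg0 : g 0 = (X : ℂ[X])^n • 1 := by
    rw [hg]; simp [gradB_zero]
  have hgn : g n = 0 := by
    have : g n = (X : ℂ[X]) ^ (n - n) • (gradB n n x).map C := rfl
    rw [this, gradB_dim]; simp
  rw [hg0, hgn, sub_zero, ← Finset.sum_smul, ← sub_smul]
  congr 1
  have hc : ∀ k ∈ Finset.range n,
      (X : ℂ[X])^(n-1-k) * C (charCoeff n (k+1) x)
        = -((fun j => C (x.charpoly.coeff j) * X ^ j) (n - 1 - k)) := by
    intro k hk
    have hkn : k < n := Finset.mem_range.mp hk
    rw [charCoeff, show n - (k+1) = n - 1 - k by omega, map_neg, mul_neg, mul_comm]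
  rw [Finset.sum_congr rfl hc, Finset.sum_neg_distrib, sub_neg_eq_add,
    Finset.sum_range_reflect (fun j => C (x.charpoly.coeff j) * X ^ j) n]
  have hdeg : x.charpoly.natDegree = n := by simp
  have hcn : x.charpoly.coeff n = 1 := by
    have := x.charpoly_monic.coeff_natDegree
    rwa [hdeg] at this
  conv_rhs => rw [x.charpoly.as_sum_range' (n+1) (by omega)]
  rw [Finset.sum_range_succ]
  simp only [← C_mul_X_pow_eq_monomial, hcn, Polynomial.C_1, one_mul]
  ring

lemma one_one_mul {m : ℕ} {K : Type*} [CommRing K] (a : Matrix (Fin 1) (Fin 1) K)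
    (W : Matrix (Fin 1) (Fin m) K) : a * W = (a 0 0) • W := by
  ext i j
  have hi : i = 0 := Subsingleton.elim i 0
  subst hi
  simp [Matrix.mul_apply, Fin.sum_univ_one]

lemma map_smul_one {R S : Type*} [CommRing R] [CommRing S] (f : R →+* S) {n : ℕ} (a : R) :
    ((a • (1 : Matrix (Fin n) (Fin n) R)).map f) = f a • (1 : Matrix (Fin n) (Fin n) S) := by
  ext i j; by_cases h : i = j <;> simp [Matrix.map_apply, Matrix.one_apply, h]

theorem keyK (n : ℕ) {K : Type*} [Field K] (f : ℂ[X] →+* K) (hinj : Function.Injective f)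
    (y : Matrix (Fin n) (Fin n) ℂ)
    (vstar : Matrix (Fin 1) (Fin n) ℂ) (u : Matrix (Fin n) (Fin 1) ℂ) :
    ((vstar.map C) * Smat n (y + u * vstar)).map f
      = ((vstar.map C) * Smat n y).map f := by
  classical
  set x := y + u * vstar with hx
  set A : Matrix (Fin n) (Fin n) K := (charmatrix y).map f with hA
  set A' : Matrix (Fin n) (Fin n) K := (charmatrix x).map f with hA'def
  set U : Matrix (Fin n) (Fin 1) K := (u.map C).map f with hU
  set V : Matrix (Fin 1) (Fin n) K := (vstar.map C).map f with hV
  set Sx : Matrix (Fin n) (Fin n) K := (Smat n x).map f with hSxdef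
  set Sy : Matrix (Fin n) (Fin n) K := (Smat n y).map f with hSydef
  have hchm : charmatrix x = charmatrix y - (u * vstar).map C := by
    rw [hx]
    unfold charmatrix
    rw [map_add, ← sub_sub, RingHom.mapMatrix_apply, RingHom.mapMatrix_apply]
  have hA' : A' = A - U * V := by
    rw [hA'def, hchm, Matrix.map_sub, Matrix.map_mul, Matrix.map_mul]
    exact fun a b => map_sub _ a b
  have hdetA : A.det = f y.charpoly := (RingHom.map_det f (charmatrix y)).symm
  have hdetA' : A'.det = f x.charpoly := (RingHom.map_det f (charmatrix x)).symm
  have hcy0 : f y.charpoly ≠ 0 := by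
    rw [map_ne_zero_iff f hinj]
    exact y.charpoly_monic.ne_zero
  have hcx0 : f x.charpoly ≠ 0 := by
    rw [map_ne_zero_iff f hinj]
    exact x.charpoly_monic.ne_zero
  have hAunit : IsUnit A.det := by rw [hdetA]; exact isUnit_iff_ne_zero.mpr hcy0
  have hA'unit : IsUnit A'.det := by rw [hdetA']; exact isUnit_iff_ne_zero.mpr hcx0
  haveI : Invertible A := A.invertibleOfIsUnitDet hAunit
  have hSyA : Sy * A = f y.charpoly • 1 := by
    rw [hSydef, hA, ← Matrix.map_mul, Smat_mul, map_smul_one]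
  have hSxA : Sx * A' = f x.charpoly • 1 := by
    rw [hSxdef, hA'def, ← Matrix.map_mul, Smat_mul, map_smul_one]
  have hSy : Sy = f y.charpoly • A⁻¹ := by
    calc Sy = Sy * (A * A⁻¹) := by rw [Matrix.mul_nonsing_inv A hAunit, Matrix.mul_one]
    _ = (Sy * A) * A⁻¹ := by rw [Matrix.mul_assoc]
    _ = (f y.charpoly • (1 : Matrix (Fin n) (Fin n) K)) * A⁻¹ := by rw [hSyA]
    _ = f y.charpoly • A⁻¹ := by rw [Matrix.smul_mul, Matrix.one_mul]
  have hSx : Sx = f x.charpoly • A'⁻¹ := by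
    calc Sx = Sx * (A' * A'⁻¹) := by rw [Matrix.mul_nonsing_inv A' hA'unit, Matrix.mul_one]
    _ = (Sx * A') * A'⁻¹ := by rw [Matrix.mul_assoc]
    _ = (f x.charpoly • (1 : Matrix (Fin n) (Fin n) K)) * A'⁻¹ := by rw [hSxA]
    _ = f x.charpoly • A'⁻¹ := by rw [Matrix.smul_mul, Matrix.one_mul]
  set c : K := (V * A⁻¹ * U) 0 0 with hc
  have hdet' : A'.det = A.det * (1 - c) := by
    rw [hA', ← Matrix.det_fromBlocks_one₂₂ A U V, Matrix.det_fromBlocks₁₁]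
    congr 1
    rw [Matrix.det_fin_one, Matrix.sub_apply, Matrix.one_apply_eq, Matrix.invOf_eq_nonsing_inv]
  have hVAA' : V * A⁻¹ * A' = (1 - c) • V := by
    rw [hA', Matrix.mul_sub, Matrix.mul_assoc V A⁻¹ A, Matrix.nonsing_inv_mul A hAunit,
      Matrix.mul_one, ← Matrix.mul_assoc (V * A⁻¹) U V, one_one_mul, ← hc, sub_smul, one_smul]
  have hVAinv : V * A⁻¹ = (1 - c) • (V * A'⁻¹) := by
    calc V * A⁻¹ = V * A⁻¹ * (A' * A'⁻¹) := by
          rw [Matrix.mul_nonsing_inv A' hA'unit, Matrix.mul_one]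
    _ = (V * A⁻¹ * A') * A'⁻¹ := by rw [← Matrix.mul_assoc (V * A⁻¹) A' A'⁻¹]
    _ = ((1 - c) • V) * A'⁻¹ := by rw [hVAA']
    _ = (1 - c) • (V * A'⁻¹) := by rw [Matrix.smul_mul]
  have h1c : f x.charpoly = f y.charpoly * (1 - c) := by
    rw [← hdetA, ← hdetA']; exact hdet'
  have hkeyK : V * Sx = V * Sy := by
    rw [hSx, hSy, Matrix.mul_smul, Matrix.mul_smul, hVAinv, smul_smul, ← h1c]
  rw [Matrix.map_mul, Matrix.map_mul]
  exact hkeyK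

theorem key (n : ℕ) (y : Matrix (Fin n) (Fin n) ℂ)
    (vstar : Matrix (Fin 1) (Fin n) ℂ) (u : Matrix (Fin n) (Fin 1) ℂ) :
    vstar.map C * Smat n (y + u * vstar) = vstar.map C * Smat n y := by
  have hinj : Function.Injective (algebraMap ℂ[X] (FractionRing ℂ[X])) :=
    IsFractionRing.injective ℂ[X] (FractionRing ℂ[X])
  have h := keyK n (algebraMap ℂ[X] (FractionRing ℂ[X])) hinj y vstar u
  refine Matrix.ext fun i j => hinj ?_
  have := congrArg (fun M => M i j) h
  simpa [Matrix.map_apply] using this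


/--  for a rank-one perturbation. -/
theorem stmt3 (n : ℕ) (k : ℕ) (hk : k ≤ n - 1) (y : Matrix (Fin n) (Fin n) ℂ)
    (vstar : Matrix (Fin 1) (Fin n) ℂ) (u : Matrix (Fin n) (Fin 1) ℂ) :
    vstar * gradB n k (y + u * vstar) = vstar * gradB n k y := by

  rcases Nat.eq_zero_or_pos n with hn | hn
  · subst hn
    exact Matrix.ext fun i j => j.elim0
  have hkn : k < n := by omega
  have hkey := key n y vstar u
  refine Matrix.ext fun i j => ?_
  have hcomp : ∀ z : Matrix (Fin n) (Fin n) ℂ,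
      ((vstar.map C * Smat n z) i j).coeff (n-1-k) = (vstar * gradB n k z) i j := by
    intro z
    rw [Smat, Matrix.mul_sum]
    simp only [Matrix.sum_apply]
    have hterm : ∀ k' ∈ Finset.range n,
        (vstar.map C * ((X : ℂ[X])^(n-1-k') • (gradB n k' z).map C)) i j
          = C ((vstar * gradB n k' z) i j) * X^(n-1-k') := by
      intro k' _
      rw [Matrix.mul_smul, ← Matrix.map_mul, Matrix.smul_apply, Matrix.map_apply,
        smul_eq_mul, mul_comm]
    rw [Finset.sum_congr rfl hterm, Polynomial.finset_sum_coeff]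
    have hcoeff : ∀ k' ∈ Finset.range n,
        (C ((vstar * gradB n k' z) i j) * X^(n-1-k')).coeff (n-1-k)
          = if k' = k then (vstar * gradB n k' z) i j else 0 := by
      intro k' hk'
      have hk'n : k' < n := Finset.mem_range.mp hk'
      rw [Polynomial.coeff_C_mul, Polynomial.coeff_X_pow]
      by_cases h : k' = k
      · subst h; simp
      · have hne : ¬ (n-1-k = n-1-k') := by omega
        simp [hne, h]
    rw [Finset.sum_congr rfl hcoeff, Finset.sum_ite_eq' (Finset.range n) k]
    simp [Finset.mem_range.mpr hkn]
  rw [← hcomp (y + u * vstar), ← hcomp y, hkey]
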